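/- Let q be a real number with q > 0 and q ≠ 1, let k ≥ 1 and n be natural numbers, and let x_1, …, x_k be real numbers. Then Σ C_q(n; r_1,…,r_k) · ∏_{j=1}^{k} [ x_j^{r_j} · ∏_{i=1}^{n − s_j} (1 − x_j q^{i−1}) ] = 1, where the sum is over all tuples (r_1,…,r_k) of natural numbers with r_1 + ⋯ + r_k ≤ n, and s_j = r_1 + ⋯ + r_j. -/

import Mathlib

noncomputable def qNum (q : ℝ) (m : ℤ) : ℝ := (1 - q ^ m) / (1 - q)

noncomputable def qFactorial (q : ℝ) (n : ℕ) : ℝ :=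
  ∏ i ∈ Finset.range n, qNum q ((i : ℤ) + 1)

noncomputable def qFacOrd (q : ℝ) (x : ℤ) (r : ℕ) : ℝ :=
  ∏ i ∈ Finset.range r, qNum q (x - (i : ℤ))

noncomputable def qMultinomial (q : ℝ) (x : ℤ) {k : ℕ} (r : Fin k → ℕ) : ℝ :=
  qFacOrd q x (∑ j, r j) / ∏ j, qFactorial q (r j)

noncomputable def qBinom (q : ℝ) (x : ℤ) (r : ℕ) : ℝ := qFacOrd q x r / qFactorial q r

section
variable {q : ℝ}

lemma qNum_pos (hq : 0 < q) (hq1 : q ≠ 1) (m : ℕ) : 0 < qNum q ((m : ℤ) + 1) := by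
  have h1 : ((m : ℤ) + 1) = ((m + 1 : ℕ) : ℤ) := by push_cast; ring
  rw [h1, qNum, zpow_natCast]
  rcases lt_or_gt_of_ne hq1 with h | h
  · apply div_pos
    · have : q ^ (m + 1) < 1 := pow_lt_one₀ hq.le h (Nat.succ_ne_zero m)
      linarith
    · linarith
  · have : 1 < q ^ (m + 1) := one_lt_pow₀ h (Nat.succ_ne_zero m)
    apply div_pos_of_neg_of_neg <;> linarith

lemma qFactorial_pos (hq : 0 < q) (hq1 : q ≠ 1) (n : ℕ) : 0 < qFactorial q n := by
  apply Finset.prod_pos; intro i _; exact qNum_pos hq hq1 i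

lemma qFacOrd_succ (x : ℤ) (r : ℕ) :
    qFacOrd q x (r + 1) = qFacOrd q x r * qNum q (x - r) := Finset.prod_range_succ _ _

lemma qFacOrd_succ_left (x : ℤ) (r : ℕ) :
    qFacOrd q x (r + 1) = qNum q x * qFacOrd q (x - 1) r := by
  unfold qFacOrd
  rw [Finset.prod_range_succ', mul_comm (∏ _i ∈ Finset.range r, _)]
  congr 1
  · norm_num
  · apply Finset.prod_congr rfl; intros i _; congr 1; push_cast; ring

lemma qFacOrd_add (x : ℤ) (a b : ℕ) :
    qFacOrd q x (a + b) = qFacOrd q x a * qFacOrd q (x - a) b := by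
  unfold qFacOrd
  rw [Finset.prod_range_add]
  congr 1
  apply Finset.prod_congr rfl; intros i _; congr 1; push_cast; ring

lemma qNum_zero : qNum q 0 = 0 := by simp [qNum]

lemma qFacOrd_self_succ (n : ℕ) : qFacOrd q (n : ℤ) (n + 1) = 0 := by
  apply Finset.prod_eq_zero (Finset.self_mem_range_succ n)
  rw [sub_self]
  simp [qNum]

lemma qNum_pascal (hq : 0 < q) (hq1 : q ≠ 1) (n s : ℕ) :
    qNum q ((n : ℤ) + 1) = qNum q ((n : ℤ) - s) + q ^ ((n : ℤ) - s) * qNum q ((s : ℤ) + 1) := by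
  have h1q : (1 : ℝ) - q ≠ 0 := sub_ne_zero.mpr (Ne.symm hq1)
  have hz : q ^ ((n : ℤ) - s) * q ^ ((s : ℤ) + 1) = q ^ ((n : ℤ) + 1) := by
    rw [← zpow_add₀ (ne_of_gt hq)]; ring_nf
  unfold qNum
  field_simp
  linear_combination hz

end
section
variable {q : ℝ}

lemma qFacOrd_pascal (hq : 0 < q) (hq1 : q ≠ 1) (n s : ℕ) :
    qFacOrd q ((n : ℤ) + 1) (s + 1)
      = qFacOrd q (n : ℤ) (s + 1)
        + q ^ ((n : ℤ) - s) * qNum q ((s : ℤ) + 1) * qFacOrd q (n : ℤ) s := by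
  have h1 : qFacOrd q ((n : ℤ) + 1) (s + 1) = qNum q ((n : ℤ) + 1) * qFacOrd q (n : ℤ) s := by
    rw [qFacOrd_succ_left]; ring_nf
  rw [h1, qFacOrd_succ, qNum_pascal hq hq1 n s]
  ring

lemma qFactorial_succ (s : ℕ) :
    qFactorial q (s + 1) = qFactorial q s * qNum q ((s : ℤ) + 1) := Finset.prod_range_succ _ _

lemma qBinom_pascal (hq : 0 < q) (hq1 : q ≠ 1) (n s : ℕ) :
    qBinom q ((n : ℤ) + 1) (s + 1)
      = qBinom q (n : ℤ) (s + 1) + q ^ ((n : ℤ) - s) * qBinom q (n : ℤ) s := by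
  have hfs : qFactorial q s ≠ 0 := ne_of_gt (qFactorial_pos hq hq1 s)
  have hns : qNum q ((s : ℤ) + 1) ≠ 0 := ne_of_gt (qNum_pos hq hq1 s)
  unfold qBinom
  rw [qFacOrd_pascal hq hq1 n s, qFactorial_succ]
  field_simp

lemma qBinom_zero (x : ℤ) : qBinom q x 0 = 1 := by simp [qBinom, qFacOrd, qFactorial]

lemma qBinom_self_succ (n : ℕ) : qBinom q (n : ℤ) (n + 1) = 0 := by
  simp [qBinom, qFacOrd_self_succ]

/-- q-binomial theorem base identity -/
lemma qbinom_sum (hq : 0 < q) (hq1 : q ≠ 1) (n : ℕ) (x : ℝ) :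
    ∑ t ∈ Finset.range (n + 1),
      qBinom q (n : ℤ) t * (x ^ t * ∏ i ∈ Finset.range (n - t), (1 - x * q ^ i)) = 1 := by
  induction n with
  | zero => simp [qBinom_zero]
  | succ n ih =>
    set P : ℕ → ℝ := fun m => ∏ i ∈ Finset.range m, (1 - x * q ^ i) with hP
    have hPsucc : ∀ m : ℕ, P (m + 1) = P m * (1 - x * q ^ m) := fun m =>
      Finset.prod_range_succ _ _
    -- split off t = 0
    rw [Finset.sum_range_succ']
    have hkey : ∀ s ∈ Finset.range (n + 1),
        qBinom q ((n : ℤ) + 1) (s + 1) * (x ^ (s + 1) * P ((n + 1) - (s + 1)))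
          = qBinom q (n : ℤ) (s + 1) * (x ^ (s + 1) * P (n - s))
            + qBinom q (n : ℤ) s * (q ^ (n - s) * x ^ (s + 1) * P (n - s)) := by
      intro s hs
      rw [Finset.mem_range] at hs
      have h1 : (n + 1) - (s + 1) = n - s := by omega
      have h2 : q ^ ((n : ℤ) - s) = q ^ (n - s) := by
        rw [show (n : ℤ) - s = ((n - s : ℕ) : ℤ) by omega, zpow_natCast]
      rw [h1, qBinom_pascal hq hq1 n s, h2]
      ring
    have hc : ∀ s ∈ Finset.range (n + 1),
        qBinom q (↑(n + 1)) (s + 1) * (x ^ (s + 1) * P ((n + 1) - (s + 1)))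
          = qBinom q (n : ℤ) (s + 1) * (x ^ (s + 1) * P (n - s))
            + qBinom q (n : ℤ) s * (q ^ (n - s) * x ^ (s + 1) * P (n - s)) := by
      intro s hs; rw [show ((n + 1 : ℕ) : ℤ) = (n : ℤ) + 1 by push_cast; ring]
      exact hkey s hs
    rw [Finset.sum_congr rfl hc, Finset.sum_add_distrib]
    -- first sum
    have hfirst : ∑ s ∈ Finset.range (n + 1),
        qBinom q (n : ℤ) (s + 1) * (x ^ (s + 1) * P (n - s))
        = (∑ t ∈ Finset.range (n + 1), qBinom q (n : ℤ) t * (x ^ t * P (n - t)))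
          - (∑ s ∈ Finset.range (n + 1),
              qBinom q (n : ℤ) s * (q ^ (n - s) * x ^ (s + 1) * P (n - s)))
          - P (n + 1) := by
      have e1 : ∑ t ∈ Finset.range (n + 2), qBinom q (n : ℤ) t * (x ^ t * P ((n + 1) - t))
          = (∑ s ∈ Finset.range (n + 1),
              qBinom q (n : ℤ) (s + 1) * (x ^ (s + 1) * P (n - s))) + P (n + 1) := by
        rw [Finset.sum_range_succ']
        simp [qBinom_zero]
      have e2 : ∑ t ∈ Finset.range (n + 2), qBinom q (n : ℤ) t * (x ^ t * P ((n + 1) - t))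
          = ∑ t ∈ Finset.range (n + 1), qBinom q (n : ℤ) t * (x ^ t * P ((n + 1) - t)) := by
        rw [Finset.sum_range_succ, qBinom_self_succ]; ring
      have e3 : ∑ t ∈ Finset.range (n + 1), qBinom q (n : ℤ) t * (x ^ t * P ((n + 1) - t))
          = ∑ t ∈ Finset.range (n + 1),
              (qBinom q (n : ℤ) t * (x ^ t * P (n - t))
                - qBinom q (n : ℤ) t * (q ^ (n - t) * x ^ (t + 1) * P (n - t))) := by
        apply Finset.sum_congr rfl
        intro t ht
        rw [Finset.mem_range] at ht
        have h1 : (n + 1) - t = (n - t) + 1 := by omega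
        rw [h1, hPsucc]
        ring
      rw [e3, Finset.sum_sub_distrib] at e2
      linarith [e1, e2]
    rw [hfirst, ih]
    have h0 : qBinom q (↑(n + 1)) 0 * (x ^ 0 * P (n + 1 - 0)) = P (n + 1) := by
      simp [qBinom_zero]
    rw [h0, hPsucc]
    ring
end

section
variable {q : ℝ}

lemma qMultinomial_cons {k : ℕ} (z : ℤ) (t : ℕ) (v : Fin k → ℕ) :
    qMultinomial q z (Fin.cons t v) = qBinom q z t * qMultinomial q (z - t) v := by
  unfold qMultinomial qBinom
  rw [Fin.sum_cons, qFacOrd_add, div_mul_div_comm]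
  congr 1
  rw [Fin.prod_univ_succ]
  simp [Fin.cons_zero, Fin.cons_succ]

lemma psum_cons_zero {k : ℕ} (a : ℕ) (v : Fin k → ℕ) :
    ∑ i' ∈ Finset.univ.filter (fun i' => i' ≤ (0 : Fin (k + 1))), Fin.cons a v i' = a := by
  rw [Finset.sum_filter, Fin.sum_univ_succ]
  simp [Fin.le_zero_iff, Fin.succ_ne_zero]

lemma psum_cons_succ {k : ℕ} (a : ℕ) (v : Fin k → ℕ) (j : Fin k) :
    ∑ i' ∈ Finset.univ.filter (fun i' => i' ≤ Fin.succ j), Fin.cons a v i'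
      = a + ∑ i' ∈ Finset.univ.filter (fun i' => i' ≤ j), v i' := by
  rw [Finset.sum_filter, Fin.sum_univ_succ, Finset.sum_filter]
  simp [Fin.zero_le, Fin.succ_le_succ_iff]

lemma reindex {k n m : ℕ} (h : m ≤ n) (f : (Fin k → ℕ) → ℝ) :
    ∑ r ∈ Finset.univ.filter (fun r : Fin k → Fin (n + 1) => ∑ j, (r j : ℕ) ≤ m),
        f (fun j => (r j : ℕ))
      = ∑ r ∈ Finset.univ.filter (fun r : Fin k → Fin (m + 1) => ∑ j, (r j : ℕ) ≤ m),
        f (fun j => (r j : ℕ)) := by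
  have hb : ∀ (r : Fin k → Fin (n + 1)),
      (∑ j, (r j : ℕ) ≤ m) → ∀ j, (r j : ℕ) ≤ m := by
    intro r hr j
    exact le_trans (Finset.single_le_sum (f := fun j => ((r j : ℕ))) (fun i _ => Nat.zero_le _) (Finset.mem_univ j)) hr
  apply Finset.sum_nbij'
    (i := fun (r : Fin k → Fin (n + 1)) (j : Fin k) => (⟨min (r j : ℕ) m, by omega⟩ : Fin (m + 1)))
    (j := fun (r : Fin k → Fin (m + 1)) (j : Fin k) =>
      (⟨(r j : ℕ), by have := (r j).isLt; omega⟩ : Fin (n + 1)))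
  · intro r hr
    simp only [Finset.mem_filter, Finset.mem_univ, true_and] at hr ⊢
    calc ∑ j, ((⟨min (r j : ℕ) m, by omega⟩ : Fin (m + 1)) : ℕ) = ∑ j, min (r j : ℕ) m := rfl
    _ ≤ _ := by
      apply le_trans _ hr
      apply Finset.sum_le_sum
      intro i _
      exact min_le_left _ _
  · intro r hr
    simp only [Finset.mem_filter, Finset.mem_univ, true_and] at hr ⊢
    exact hr
  · intro r hr
    simp only [Finset.mem_filter, Finset.mem_univ, true_and] at hr
    funext j
    have := hb r hr j
    apply Fin.ext
    simp [Nat.min_eq_left this]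
  · intro r hr
    simp only [Finset.mem_filter, Finset.mem_univ, true_and] at hr
    funext j
    have : (r j : ℕ) ≤ m := by have := (r j).isLt; omega
    apply Fin.ext
    simp [Nat.min_eq_left this]
  · intro r hr
    simp only [Finset.mem_filter, Finset.mem_univ, true_and] at hr
    congr 1
    funext j
    simp [Nat.min_eq_left (hb r hr j)]

lemma main_sum (hq : 0 < q) (hq1 : q ≠ 1) :
    ∀ (k n : ℕ) (x : Fin k → ℝ),
    ∑ r ∈ Finset.univ.filter (fun r : Fin k → Fin (n + 1) => ∑ j, (r j : ℕ) ≤ n),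
      qMultinomial q (n : ℤ) (fun j => (r j : ℕ)) *
        ∏ j : Fin k,
          x j ^ (r j : ℕ) *
            ∏ i ∈ Finset.range
                (n - ∑ i' ∈ Finset.univ.filter (fun i' => i' ≤ j), (r i' : ℕ)),
              (1 - x j * q ^ i) = 1 := by
  intro k
  induction k with
  | zero =>
    intro n x
    simp [qMultinomial, qFacOrd, Finset.filter_true_of_mem]
  | succ k ihk =>
    intro n x
    rw [Finset.sum_filter]
    rw [← Equiv.sum_comp (Fin.consEquiv (fun _ : Fin (k + 1) => Fin (n + 1)))]
    rw [Fintype.sum_prod_type]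
    have hstep : ∀ a : Fin (n + 1),
        (∑ b : Fin k → Fin (n + 1),
          (if (∑ j, ((Fin.consEquiv (fun _ : Fin (k + 1) => Fin (n + 1))) (a, b) j : ℕ) ≤ n) then
            qMultinomial q (n : ℤ)
                (fun j => ((Fin.consEquiv (fun _ : Fin (k + 1) => Fin (n + 1))) (a, b) j : ℕ)) *
              ∏ j : Fin (k + 1),
                x j ^ ((Fin.consEquiv (fun _ : Fin (k + 1) => Fin (n + 1))) (a, b) j : ℕ) *
                  ∏ i ∈ Finset.range
                      (n - ∑ i' ∈ Finset.univ.filter (fun i' => i' ≤ j),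
                        ((Fin.consEquiv (fun _ : Fin (k + 1) => Fin (n + 1))) (a, b) i' : ℕ)),
                    (1 - x j * q ^ i)
          else 0))
        = qBinom q (n : ℤ) (a : ℕ) *
            ((x 0) ^ (a : ℕ) * ∏ i ∈ Finset.range (n - (a : ℕ)), (1 - x 0 * q ^ i)) := by
      intro a
      have hA : (a : ℕ) ≤ n := Nat.lt_succ_iff.mp a.isLt
      have hce : ∀ b : Fin k → Fin (n + 1),
          (Fin.consEquiv (fun _ : Fin (k + 1) => Fin (n + 1))) (a, b) = Fin.cons a b :=
        fun _ => rfl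
      have hvalp : ∀ (b : Fin k → Fin (n + 1)) (j : Fin (k + 1)),
          (((Fin.cons a b : Fin (k + 1) → Fin (n + 1)) j : Fin (n + 1)) : ℕ)
            = (Fin.cons (a : ℕ) (fun j' => ((b j' : ℕ))) : Fin (k + 1) → ℕ) j := by
        intro b j
        refine Fin.cases ?_ (fun j' => ?_) j <;> simp
      have hcast : (n : ℤ) - ((a : ℕ) : ℤ) = (((n - (a : ℕ)) : ℕ) : ℤ) := by omega
      simp only [hce, hvalp]
      simp only [qMultinomial_cons, Fin.prod_univ_succ, Fin.sum_univ_succ, Fin.cons_zero,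
        Fin.cons_succ, psum_cons_zero, psum_cons_succ, ← Nat.sub_sub, hcast]
      have hpoint : ∀ b : Fin k → Fin (n + 1),
          (if (a : ℕ) + ∑ j, (b j : ℕ) ≤ n then
            qBinom q (n : ℤ) (a : ℕ) *
                qMultinomial q (((n - (a : ℕ) : ℕ)) : ℤ) (fun j => (b j : ℕ)) *
              ((x 0 ^ (a : ℕ) * ∏ i ∈ Finset.range (n - (a : ℕ)), (1 - x 0 * q ^ i)) *
                ∏ j : Fin k,
                  x (Fin.succ j) ^ (b j : ℕ) *
                    ∏ i ∈ Finset.range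
                        ((n - (a : ℕ)) - ∑ i' ∈ Finset.univ.filter (fun i' => i' ≤ j), (b i' : ℕ)),
                      (1 - x (Fin.succ j) * q ^ i))
          else 0)
          = (qBinom q (n : ℤ) (a : ℕ) *
              (x 0 ^ (a : ℕ) * ∏ i ∈ Finset.range (n - (a : ℕ)), (1 - x 0 * q ^ i))) *
            (if (∑ j, (b j : ℕ)) ≤ n - (a : ℕ) then
              qMultinomial q (((n - (a : ℕ) : ℕ)) : ℤ) (fun j => (b j : ℕ)) *
                ∏ j : Fin k,
                  x (Fin.succ j) ^ (b j : ℕ) *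
                    ∏ i ∈ Finset.range
                        ((n - (a : ℕ)) - ∑ i' ∈ Finset.univ.filter (fun i' => i' ≤ j), (b i' : ℕ)),
                      (1 - x (Fin.succ j) * q ^ i)
            else 0) := by
        intro b
        by_cases hcb : (∑ j, (b j : ℕ)) ≤ n - (a : ℕ)
        · rw [if_pos (by omega), if_pos hcb]
          ring
        · rw [if_neg (by omega), if_neg hcb]
          ring
      rw [Finset.sum_congr rfl (fun b _ => hpoint b), ← Finset.mul_sum, ← Finset.sum_filter]
      have hS : ∑ b ∈ Finset.univ.filter
            (fun b : Fin k → Fin (n + 1) => (∑ j, (b j : ℕ)) ≤ n - (a : ℕ)),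
          qMultinomial q (((n - (a : ℕ) : ℕ)) : ℤ) (fun j => (b j : ℕ)) *
            ∏ j : Fin k,
              x (Fin.succ j) ^ (b j : ℕ) *
                ∏ i ∈ Finset.range
                    ((n - (a : ℕ)) - ∑ i' ∈ Finset.univ.filter (fun i' => i' ≤ j), (b i' : ℕ)),
                  (1 - x (Fin.succ j) * q ^ i) = 1 := by
        have h1 := reindex (k := k) (n := n) (m := n - (a : ℕ)) (Nat.sub_le n _)
          (fun v => qMultinomial q (((n - (a : ℕ) : ℕ)) : ℤ) v *
            ∏ j : Fin k,
              x (Fin.succ j) ^ v j *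
                ∏ i ∈ Finset.range
                    ((n - (a : ℕ)) - ∑ i' ∈ Finset.univ.filter (fun i' => i' ≤ j), v i'),
                  (1 - x (Fin.succ j) * q ^ i))
        have h2 := ihk (n - (a : ℕ)) (fun j => x (Fin.succ j))
        exact h1.trans h2
      rw [hS, mul_one]
    rw [Finset.sum_congr rfl (fun a _ => hstep a)]
    rw [Fin.sum_univ_eq_sum_range
      (fun t => qBinom q (n : ℤ) t * ((x 0) ^ t * ∏ i ∈ Finset.range (n - t), (1 - x 0 * q ^ i)))]
    exact qbinom_sum hq hq1 n (x 0)
end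

/-- Second identity of Corollary 2.1 (q-case):
    Σ_{r, Σr_j ≤ n} C_q(n; r) ∏_j x_j^(r_j) ∏_{i=1}^{n−s_j} (1 − x_j q^(i−1)) = 1. -/
theorem qMultinomial_sum_one' (q : ℝ) (hq : 0 < q) (hq1 : q ≠ 1)
    (k n : ℕ) (hk : 1 ≤ k) (x : Fin k → ℝ) :
    ∑ r ∈ Finset.univ.filter (fun r : Fin k → Fin (n + 1) => ∑ j, (r j : ℕ) ≤ n),
      qMultinomial q (n : ℤ) (fun j => (r j : ℕ)) *
        ∏ j : Fin k,
          x j ^ (r j : ℕ) *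
            ∏ i ∈ Finset.range
                (n - ∑ i' ∈ Finset.univ.filter (fun i' => i' ≤ j), (r i' : ℕ)),
              (1 - x j * q ^ i) = 1 := by
  exact main_sum (q := q) hq hq1 k n x
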